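/- Let L be a countable relational first-order language and let K be a nonempty Fraïssé class of finite (equivalently, finitely generated) L-structures with only countably many members up to isomorphism, and let M be the countable ultrahomogeneous L-structure whose age is K. Then K has the strong amalgamation property if and only if M has trivial group-theoretic definable closure. -/

import Mathlib

open FirstOrder FirstOrder.Language Set Cardinal

universe u

/-- A class of structures has the strong amalgamation property if any two embeddings
`i₁ : A ↪ B`, `i₂ : A ↪ C` between members have an amalgam `j₁ : B ↪ D`, `j₂ : C ↪ D`
with `j₁ ∘ i₁ = j₂ ∘ i₂` whose images intersect exactly in the image of `A`. -/
def StrongAmalgamation {L : FirstOrder.Language.{u, u}}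
    (K : Set (CategoryTheory.Bundled.{u} L.Structure)) : Prop :=
  ∀ (A B C : CategoryTheory.Bundled.{u} L.Structure) (i₁ : A ↪[L] B) (i₂ : A ↪[L] C),
    A ∈ K → B ∈ K → C ∈ K →
      ∃ (D : CategoryTheory.Bundled.{u} L.Structure) (j₁ : B ↪[L] D) (j₂ : C ↪[L] D),
        D ∈ K ∧ j₁.comp i₁ = j₂.comp i₂ ∧
          Set.range j₁ ∩ Set.range j₂ = Set.range (j₁.comp i₁)

/-- The group-theoretic definable closure of a set `s` in `M`: the set of points fixed by
every automorphism of `M` fixing `s` pointwise. -/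
def gdcl (L : FirstOrder.Language.{u, u}) (M : Type u) [L.Structure M] (s : Set M) : Set M :=
  {b : M | ∀ g : M ≃[L] M, (∀ a ∈ s, g a = a) → g b = b}

section Aux

variable {L : FirstOrder.Language.{u, u}} [L.IsRelational] {M : Type u} [L.Structure M]

open Substructure

/-- If gdcl is trivial, then all orbits over finitely generated substructures
(of points outside them) are infinite. -/
lemma orbit_infinite_of_trivial_gdcl
    (H : ∀ A : L.Substructure M, Substructure.FG A → gdcl L M (A : Set M) = (A : Set M))
    (S : L.Substructure M) (hS : S.FG) (b : M) (hb : b ∉ S) :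
    {c : M | ∃ k : M ≃[L] M, (∀ a ∈ (S : Set M), k a = a) ∧ k b = c}.Infinite := by
  set O := {c : M | ∃ k : M ≃[L] M, (∀ a ∈ (S : Set M), k a = a) ∧ k b = c} with hO
  by_contra hfin
  rw [Set.not_infinite] at hfin
  haveI : Finite (↥S) := hS.finite
  set s : Set M := (S : Set M) ∪ (O \ {b}) with hs
  have hsfin : s.Finite := ((S : Set M).toFinite).union (hfin.diff)
  have hS' : (closure L s).FG := Substructure.fg_closure hsfin
  have hbs : b ∈ gdcl L M ((closure L s : L.Substructure M) : Set M) := by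
    intro g hg
    have hgS : ∀ a ∈ (S : Set M), g a = a := fun a ha => hg a (subset_closure (Or.inl ha))
    have hgO : ∀ c ∈ O \ ({b} : Set M), g c = c := fun c hc =>
      hg c (subset_closure (Or.inr hc))
    have hgb : g b ∈ O := ⟨g, hgS, rfl⟩
    by_contra h
    have h2 : g (g b) = g b := hgO (g b) ⟨hgb, h⟩
    exact h (g.injective h2)
  rw [H _ hS'] at hbs
  rw [SetLike.mem_coe, mem_closure_iff_of_isRelational] at hbs
  rcases hbs with h | h
  · exact hb h
  · exact h.2 rfl

/-- Neumann-type lemma: with trivial gdcl, a finite set can be moved off another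
finite set by an automorphism fixing a given finite set pointwise. -/
lemma move_apart_of_trivial_gdcl
    (H : ∀ A : L.Substructure M, Substructure.FG A → gdcl L M (A : Set M) = (A : Set M))
    (A' X Y : Set M) (hA' : A'.Finite) (hX : X.Finite) (hY : Y.Finite)
    (hXA : Disjoint X A') :
    ∃ k : M ≃[L] M, (∀ a ∈ A', k a = a) ∧ Disjoint (⇑k '' Y) X := by
  suffices h : ∀ n : ℕ, ∀ k : M ≃[L] M, (∀ a ∈ A', k a = a) → ((⇑k '' Y) ∩ X).ncard ≤ n →
      ∃ k' : M ≃[L] M, (∀ a ∈ A', k' a = a) ∧ Disjoint (⇑k' '' Y) X by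
    exact h _ (FirstOrder.Language.Equiv.refl L M) (fun a _ => rfl) le_rfl
  intro n
  induction n with
  | zero =>
    intro k hk hcard
    have hfin : ((⇑k '' Y) ∩ X).Finite := hX.inter_of_right _
    refine ⟨k, hk, Set.disjoint_iff_inter_eq_empty.mpr ?_⟩
    exact (Set.ncard_eq_zero hfin).1 (Nat.le_zero.1 hcard)
  | succ n ih =>
    intro k hk hcard
    by_cases hle : ((⇑k '' Y) ∩ X).ncard ≤ n
    · exact ih k hk hle
    have hfinkx : ((⇑k '' Y) ∩ X).Finite := hX.inter_of_right _
    have hcard' : ((⇑k '' Y) ∩ X).ncard = n + 1 := le_antisymm hcard (not_le.1 hle)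
    have hne : ((⇑k '' Y) ∩ X).Nonempty := by
      rw [Set.nonempty_iff_ne_empty]
      intro hemp
      rw [hemp, Set.ncard_empty] at hcard'
      omega
    obtain ⟨b, hbY, hbX⟩ := hne
    set s : Set M := A' ∪ ((⇑k '' Y) \ {b}) with hsdef
    have hsfin : s.Finite := hA'.union ((hY.image _).diff)
    have hfg : (closure L s).FG := Substructure.fg_closure hsfin
    have hbs : b ∉ closure L s := by
      rw [mem_closure_iff_of_isRelational]
      rintro (h | h)
      · exact (Set.disjoint_left.1 hXA hbX) h
      · exact h.2 rfl
    have horb := orbit_infinite_of_trivial_gdcl H (closure L s) hfg b hbs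
    have hdiffinf := Set.Infinite.diff horb hX
    obtain ⟨c, hc⟩ := Set.Infinite.nonempty hdiffinf
    obtain ⟨⟨k₁, hk₁, hk₁b⟩, hcX⟩ := hc
    have hk₁' : ∀ x ∈ s, k₁ x = x := by
      intro x hx
      exact hk₁ x (by rw [SetLike.mem_coe, mem_closure_iff_of_isRelational]; exact hx)
    have hfix : ∀ a ∈ A', (k₁.comp k) a = a := fun a ha => by
      rw [Equiv.comp_apply, hk a ha, hk₁' a (Or.inl ha)]
    apply ih (k₁.comp k) hfix
    have hsub : (⇑(k₁.comp k) '' Y) ∩ X ⊆ ((⇑k '' Y) ∩ X) \ {b} := by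
      rintro x ⟨⟨y, hy, rfl⟩, hx⟩
      by_cases hkb : k y = b
      · rw [Equiv.comp_apply, hkb, hk₁b] at hx
        exact absurd hx hcX
      · have hmem : k y ∈ (⇑k '' Y) \ ({b} : Set M) := ⟨⟨y, hy, rfl⟩, hkb⟩
        have heq : (k₁.comp k) y = k y := by
          rw [Equiv.comp_apply]; exact hk₁' _ (Or.inr hmem)
        rw [heq] at hx ⊢
        exact ⟨⟨⟨y, hy, rfl⟩, hx⟩, hkb⟩
    have hbmem : b ∈ (⇑k '' Y) ∩ X := ⟨hbY, hbX⟩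
    have hcard2 : (((⇑k '' Y) ∩ X) \ ({b} : Set M)).ncard = n := by
      rw [Set.ncard_diff_singleton_of_mem hbmem, hcard']
      omega
    exact le_trans (Set.ncard_le_ncard hsub (hfinkx.diff)) (le_of_eq hcard2)

end Aux

/-- For a countable relational language `L`, a Fraïssé class `K` of finite
structures, and the countable ultrahomogeneous structure `M` with age `K`, the class `K` has
the strong amalgamation property iff `M` has trivial group-theoretic definable closure. -/
theorem strongAmalgamation_iff_trivial_gdcl {L : FirstOrder.Language.{u, u}}
    [L.IsRelational] (hL : L.card ≤ ℵ₀)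
    (K : Set (CategoryTheory.Bundled.{u} L.Structure)) (hK : L.IsFraisse K)
    (M : Type u) [L.Structure M] [Countable M]
    (hhom : L.IsUltrahomogeneous M) (hage : L.age M = K) :
    StrongAmalgamation K ↔
      ∀ A : L.Substructure M, Substructure.FG A → gdcl L M (A : Set M) = (A : Set M) := by
  constructor
  · -- SAP → trivial gdcl
    intro hSAP A hAfg
    refine subset_antisymm ?_ (fun a ha g hg => hg a ha)
    intro b hb
    by_contra hbA
    haveI : Finite (↥A) := hAfg.finite
    set B := Substructure.closure L ((A : Set M) ∪ {b}) with hBdef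
    have hbB : b ∈ B := Substructure.subset_closure (Or.inr rfl)
    have hAB : A ≤ B := fun x hx => Substructure.subset_closure (Or.inl hx)
    have hBfg : B.FG :=
      Substructure.fg_closure (((A : Set M).toFinite).union (Set.finite_singleton b))
    have hAK : CategoryTheory.Bundled.mk ↥A ∈ K := hage ▸ age.fg_substructure hAfg
    have hBK : CategoryTheory.Bundled.mk ↥B ∈ K := hage ▸ age.fg_substructure hBfg
    obtain ⟨D, j₁, j₂, hDK, hcomm, hrange⟩ :=
      hSAP (CategoryTheory.Bundled.mk ↥A) (CategoryTheory.Bundled.mk ↥B)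
        (CategoryTheory.Bundled.mk ↥B)
        (Substructure.inclusion hAB) (Substructure.inclusion hAB) hAK hBK hBK
    have hDage : D ∈ L.age M := by rw [hage]; exact hDK
    obtain ⟨-, ⟨e⟩⟩ := hDage
    have hne : j₁ ⟨b, hbB⟩ ≠ j₂ ⟨b, hbB⟩ := by
      intro heq
      have hmem : j₁ ⟨b, hbB⟩ ∈ Set.range ⇑j₁ ∩ Set.range ⇑j₂ := ⟨⟨_, rfl⟩, ⟨_, heq.symm⟩⟩
      rw [hrange] at hmem
      obtain ⟨a, ha⟩ := hmem
      rw [Embedding.comp_apply] at ha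
      have h2 := j₁.injective ha
      have h3 := congrArg Subtype.val h2
      have h4 : (a : M) = b := h3
      exact hbA (h4 ▸ a.2)
    obtain ⟨σ, hσ⟩ := hhom B hBfg (e.comp j₁)
    obtain ⟨τ, hτ⟩ := hhom B hBfg (e.comp j₂)
    have hσ' : ∀ x : ↥B, e (j₁ x) = σ ↑x := fun x =>
      congrFun (congrArg DFunLike.coe hσ) x
    have hτ' : ∀ x : ↥B, e (j₂ x) = τ ↑x := fun x =>
      congrFun (congrArg DFunLike.coe hτ) x
    have hgfix : ∀ a ∈ (A : Set M), (σ.symm.comp τ) a = a := by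
      intro a ha
      have hcoe : (↑(Substructure.inclusion hAB ⟨a, ha⟩) : M) = a := rfl
      have h1 : τ a = e (j₂ (Substructure.inclusion hAB ⟨a, ha⟩)) :=
        ((hτ' (Substructure.inclusion hAB ⟨a, ha⟩)).trans (congrArg τ hcoe)).symm
      have h2 : j₂ (Substructure.inclusion hAB ⟨a, ha⟩) =
          j₁ (Substructure.inclusion hAB ⟨a, ha⟩) := by
        have := congrFun (congrArg DFunLike.coe hcomm) (⟨a, ha⟩ : ↥A)
        rw [Embedding.comp_apply, Embedding.comp_apply] at this
        exact this.symm
      have h5 : σ a = e (j₁ (Substructure.inclusion hAB ⟨a, ha⟩)) :=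
        ((hσ' (Substructure.inclusion hAB ⟨a, ha⟩)).trans (congrArg σ hcoe)).symm
      rw [Equiv.comp_apply, h1, h2, ← h5]
      exact σ.symm_apply_apply a
    have hgb : (σ.symm.comp τ) b = b := hb _ hgfix
    rw [Equiv.comp_apply] at hgb
    have hτb : τ b = σ b := by
      have := congrArg σ hgb
      rwa [σ.apply_symm_apply] at this
    have : e (j₂ ⟨b, hbB⟩) = e (j₁ ⟨b, hbB⟩) := by
      rw [hσ' ⟨b, hbB⟩, hτ' ⟨b, hbB⟩, hτb]
    exact hne (e.injective this).symm
  · -- trivial gdcl → SAP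
    intro H A B C i₁ i₂ hA hB hC
    haveI : Finite A := Structure.fg_iff_finite.1 (hK.FG A hA)
    haveI : Finite B := Structure.fg_iff_finite.1 (hK.FG B hB)
    haveI : Finite C := Structure.fg_iff_finite.1 (hK.FG C hC)
    have hBage : B ∈ L.age M := by rw [hage]; exact hB
    have hCage : C ∈ L.age M := by rw [hage]; exact hC
    obtain ⟨-, ⟨f⟩⟩ := hBage
    haveI : Nonempty (C ↪[L] M) := hCage.2
    obtain ⟨g, hg⟩ := hhom.extend_embedding (hK.FG A hA) (f.comp i₁) i₂
    have hg' : ∀ a : A, f (i₁ a) = g (i₂ a) := fun a => by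
      have := congrFun (congrArg DFunLike.coe hg) a
      rwa [Embedding.comp_apply, Embedding.comp_apply] at this
    set A' : Set M := Set.range ⇑(f.comp i₁) with hA'def
    have hA'fin : A'.Finite := Set.finite_range _
    set X : Set M := Set.range ⇑f \ A' with hXdef
    set Y : Set M := Set.range ⇑g \ A' with hYdef
    obtain ⟨k, hk, hdisj⟩ := move_apart_of_trivial_gdcl H A' X Y hA'fin
      ((Set.finite_range ⇑f).diff) ((Set.finite_range ⇑g).diff) Set.disjoint_sdiff_left
    -- k fixes A' pointwise
    have hkA : ∀ a : A, k (f (i₁ a)) = f (i₁ a) := fun a =>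
      hk _ ⟨a, rfl⟩
    set s : Set M := Set.range ⇑f ∪ ⇑k '' Set.range ⇑g with hsdef
    set D₀ := Substructure.closure L s with hD₀def
    have hD₀fg : D₀.FG :=
      Substructure.fg_closure (((Set.finite_range ⇑f)).union ((Set.finite_range ⇑g).image _))
    have hfD : ∀ c : B, f c ∈ D₀ := fun c =>
      Substructure.subset_closure (Or.inl ⟨c, rfl⟩)
    have hgD : ∀ c : C, (k.toEmbedding.comp g) c ∈ D₀ := fun c =>
      Substructure.subset_closure (Or.inr ⟨g c, ⟨c, rfl⟩, rfl⟩)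
    refine ⟨CategoryTheory.Bundled.mk ↥D₀,
      FirstOrder.Language.Embedding.codRestrict D₀ f hfD,
      FirstOrder.Language.Embedding.codRestrict D₀ (k.toEmbedding.comp g) hgD,
      hage ▸ age.fg_substructure hD₀fg, ?_, ?_⟩
    · ext a
      show f (i₁ a) = k (g (i₂ a))
      rw [← hg' a, hkA a]
    · -- main set identity in M
      have hkey : ∀ x : M, (x ∈ Set.range ⇑f ∧ (∃ c : C, k (g c) = x)) ↔ x ∈ A' := by
        intro x
        constructor
        · rintro ⟨hxf, c, rfl⟩
          by_cases hgc : g c ∈ A'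
          · have : k (g c) = g c := hk _ hgc
            rwa [this]
          · have hmY : g c ∈ Y := ⟨⟨c, rfl⟩, hgc⟩
            by_contra hxA
            have hxX : k (g c) ∈ X := ⟨hxf, hxA⟩
            exact (Set.disjoint_left.1 hdisj ⟨g c, hmY, rfl⟩) hxX
        · rintro ⟨a, rfl⟩
          refine ⟨⟨i₁ a, rfl⟩, i₂ a, ?_⟩
          rw [← hg' a]
          exact hkA a
      ext y
      simp only [Set.mem_inter_iff, Set.mem_range]
      constructor
      · rintro ⟨⟨c₁, hc₁⟩, ⟨c₂, hc₂⟩⟩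
        have h1 : f c₁ = ↑y := congrArg Subtype.val hc₁
        have h2 : k (g c₂) = ↑y := congrArg Subtype.val hc₂
        have := (hkey ↑y).1 ⟨⟨c₁, h1⟩, ⟨c₂, h2⟩⟩
        obtain ⟨a, ha⟩ := this
        refine ⟨a, Subtype.ext ?_⟩
        show f (i₁ a) = ↑y
        exact ha
      · rintro ⟨a, rfl⟩
        refine ⟨⟨i₁ a, rfl⟩, ⟨i₂ a, Subtype.ext ?_⟩⟩
        show k (g (i₂ a)) = f (i₁ a)
        rw [← hg' a]
        exact hkA a
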